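/- Let u, v, w, x be four points of ℝ². There exists no pair (m, c) with m > 0 such that u and v lie strictly above the line L_{m,c} while x and w lie strictly below L_{m,c}, if and only if there exist a point a = (a₁, a₂) on the segment from u to v and a point b = (b₁, b₂) on the segment from x to w such that b₁ ≤ a₁ and b₂ ≥ a₂. -/

import Mathlib

lemma cross_key (u v x w p q p' q' : ℝ × ℝ)
    (H : ∀ a ∈ segment ℝ u v, ∀ b ∈ segment ℝ x w, a.1 - b.1 < 0 ∨ 0 < a.2 - b.2)
    (hp : p ∈ segment ℝ u v) (hq : q ∈ segment ℝ x w)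
    (hp' : p' ∈ segment ℝ u v) (hq' : q' ∈ segment ℝ x w)
    (he1 : p.1 - q.1 < 0) (hf1 : 0 < p'.1 - q'.1) :
    (p.1 - q.1) * (p'.2 - q'.2) < (p.2 - q.2) * (p'.1 - q'.1) := by
  set e1 := p.1 - q.1
  set f1 := p'.1 - q'.1
  have hd : (0:ℝ) < f1 - e1 := by linarith
  set t : ℝ := f1 / (f1 - e1) with ht_def
  set s : ℝ := (-e1) / (f1 - e1) with hs_def
  have ht : 0 ≤ t := div_nonneg hf1.le hd.le
  have hs : 0 ≤ s := div_nonneg (by linarith) hd.le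
  have hts : t + s = 1 := by rw [ht_def, hs_def, ← add_div]; rw [show f1 + -e1 = f1 - e1 by ring, div_self hd.ne']
  have ha : t • p + s • p' ∈ segment ℝ u v := (convex_segment u v) hp hp' ht hs hts
  have hb : t • q + s • q' ∈ segment ℝ x w := (convex_segment x w) hq hq' ht hs hts
  have hfst : (t • p + s • p').1 - (t • q + s • q').1 = 0 := by
    simp only [Prod.fst_add, Prod.smul_fst, smul_eq_mul, ht_def, hs_def]
    field_simp
    ring
  rcases H _ ha _ hb with h | h
  · rw [hfst] at h; exact absurd h (lt_irrefl 0)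
  · have hsnd : (t • p + s • p').2 - (t • q + s • q').2
        = (f1 * (p.2 - q.2) - e1 * (p'.2 - q'.2)) / (f1 - e1) := by
      simp only [Prod.snd_add, Prod.smul_snd, smul_eq_mul, ht_def, hs_def]
      field_simp
      ring
    rw [hsnd] at h
    have hX : 0 < f1 * (p.2 - q.2) - e1 * (p'.2 - q'.2) := by
      have := mul_pos h hd
      rwa [div_mul_cancel₀ _ (ne_of_gt hd)] at this
    linarith

noncomputable def loAux (p q : ℝ × ℝ) : ℝ :=
  if p.2 - q.2 ≤ 0 then (p.2 - q.2) / (p.1 - q.1) else 0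

noncomputable def gAux (L : ℝ) (p q : ℝ × ℝ) : ℝ :=
  if 0 < p.1 - q.1 then (L + (p.2 - q.2) / (p.1 - q.1)) / 2 else L + 1

lemma slope_lt (u v x w p q p' q' : ℝ × ℝ)
    (H : ∀ a ∈ segment ℝ u v, ∀ b ∈ segment ℝ x w, a.1 - b.1 < 0 ∨ 0 < a.2 - b.2)
    (hp : p ∈ segment ℝ u v) (hq : q ∈ segment ℝ x w)
    (hp' : p' ∈ segment ℝ u v) (hq' : q' ∈ segment ℝ x w)
    (he2 : p.2 - q.2 ≤ 0) (hf1 : 0 < p'.1 - q'.1) :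
    (p.2 - q.2) / (p.1 - q.1) < (p'.2 - q'.2) / (p'.1 - q'.1) := by
  have he1 : p.1 - q.1 < 0 := by
    rcases H p hp q hq with h | h
    · exact h
    · linarith
  have hcross := cross_key u v x w p q p' q' H hp hq hp' hq' he1 hf1
  rw [show (p.2 - q.2) / (p.1 - q.1) = (-(p.2 - q.2)) / (-(p.1 - q.1)) from
    (neg_div_neg_eq _ _).symm]
  rw [div_lt_div_iff₀ (by linarith) hf1]
  linarith

lemma L_lt_slope (u v x w p' q' : ℝ × ℝ)
    (H : ∀ a ∈ segment ℝ u v, ∀ b ∈ segment ℝ x w, a.1 - b.1 < 0 ∨ 0 < a.2 - b.2)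
    (hp' : p' ∈ segment ℝ u v) (hq' : q' ∈ segment ℝ x w)
    (hf1 : 0 < p'.1 - q'.1) :
    loAux u x ⊔ loAux u w ⊔ loAux v x ⊔ loAux v w ⊔ 0
      < (p'.2 - q'.2) / (p'.1 - q'.1) := by
  have hf2 : 0 < p'.2 - q'.2 := by
    rcases H p' hp' q' hq' with h | h
    · linarith
    · exact h
  have hpos : 0 < (p'.2 - q'.2) / (p'.1 - q'.1) := div_pos hf2 hf1
  have key : ∀ p ∈ segment ℝ u v, ∀ q ∈ segment ℝ x w,
      loAux p q < (p'.2 - q'.2) / (p'.1 - q'.1) := by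
    intro p hp q hq
    unfold loAux
    split_ifs with h2
    · exact slope_lt u v x w p q p' q' H hp hq hp' hq' h2 hf1
    · exact hpos
  have hu : u ∈ segment ℝ u v := left_mem_segment ℝ u v
  have hv : v ∈ segment ℝ u v := right_mem_segment ℝ u v
  have hx : x ∈ segment ℝ x w := left_mem_segment ℝ x w
  have hw : w ∈ segment ℝ x w := right_mem_segment ℝ x w
  exact sup_lt_iff.mpr ⟨sup_lt_iff.mpr ⟨sup_lt_iff.mpr ⟨sup_lt_iff.mpr
    ⟨key u hu x hx, key u hu w hw⟩, key v hv x hx⟩, key v hv w hw⟩, hpos⟩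

lemma vertex_ok (e1 e2 L m : ℝ) (hm0 : 0 < m) (hH : e1 < 0 ∨ 0 < e2)
    (hlo : (if e2 ≤ 0 then e2 / e1 else 0) ≤ L) (hLm : L < m)
    (hub : 0 < e1 → m < e2 / e1) : m * e1 < e2 := by
  rcases lt_trichotomy e1 0 with h | h | h
  · by_cases h2 : e2 ≤ 0
    · rw [if_pos h2] at hlo
      have h3 : e2 / e1 < m := lt_of_le_of_lt hlo hLm
      have := (div_lt_iff_of_neg h).mp h3
      linarith
    · push_neg at h2
      nlinarith [mul_neg_of_pos_of_neg hm0 h]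
  · rcases hH with h' | h'
    · linarith
    · rw [h, mul_zero]; exact h'
  · have := (lt_div_iff₀ h).mp (hub h)
    linarith

lemma exists_slope (u v x w : ℝ × ℝ)
    (H : ∀ a ∈ segment ℝ u v, ∀ b ∈ segment ℝ x w, a.1 - b.1 < 0 ∨ 0 < a.2 - b.2) :
    ∃ m : ℝ, 0 < m ∧ m * (u.1 - x.1) < u.2 - x.2 ∧ m * (u.1 - w.1) < u.2 - w.2 ∧
      m * (v.1 - x.1) < v.2 - x.2 ∧ m * (v.1 - w.1) < v.2 - w.2 := by
  have hu : u ∈ segment ℝ u v := left_mem_segment ℝ u v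
  have hv : v ∈ segment ℝ u v := right_mem_segment ℝ u v
  have hx : x ∈ segment ℝ x w := left_mem_segment ℝ x w
  have hw : w ∈ segment ℝ x w := right_mem_segment ℝ x w
  set L : ℝ := loAux u x ⊔ loAux u w ⊔ loAux v x ⊔ loAux v w ⊔ 0 with hLdef
  have hL0 : 0 ≤ L := le_sup_right
  have hLlt : ∀ p' ∈ segment ℝ u v, ∀ q' ∈ segment ℝ x w, 0 < p'.1 - q'.1 →
      L < (p'.2 - q'.2) / (p'.1 - q'.1) := fun p' hp' q' hq' hf1 =>
    L_lt_slope u v x w p' q' H hp' hq' hf1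
  set m : ℝ := gAux L u x ⊓ gAux L u w ⊓ gAux L v x ⊓ gAux L v w with hmdef
  have hLg : ∀ p' ∈ segment ℝ u v, ∀ q' ∈ segment ℝ x w, L < gAux L p' q' := by
    intro p' hp' q' hq'
    unfold gAux
    split_ifs with h
    · linarith [hLlt p' hp' q' hq' h]
    · linarith
  have hLm : L < m := by
    exact lt_inf_iff.mpr ⟨lt_inf_iff.mpr ⟨lt_inf_iff.mpr
      ⟨hLg u hu x hx, hLg u hu w hw⟩, hLg v hv x hx⟩, hLg v hv w hw⟩
  have hm0 : 0 < m := lt_of_le_of_lt hL0 hLm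
  have hgub : ∀ p' q' : ℝ × ℝ, p' ∈ segment ℝ u v → q' ∈ segment ℝ x w →
      0 < p'.1 - q'.1 → m ≤ gAux L p' q' →
      m < (p'.2 - q'.2) / (p'.1 - q'.1) := by
    intro p' q' hp' hq' h hmle
    have h1 := hLlt p' hp' q' hq' h
    have h2 : gAux L p' q' = (L + (p'.2 - q'.2) / (p'.1 - q'.1)) / 2 := if_pos h
    rw [h2] at hmle
    linarith
  refine ⟨m, hm0, ?_, ?_, ?_, ?_⟩
  · refine vertex_ok _ _ L m hm0 (H u hu x hx) ?_ hLm ?_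
    · calc (if u.2 - x.2 ≤ 0 then (u.2 - x.2) / (u.1 - x.1) else 0) = loAux u x := rfl
        _ ≤ L := le_sup_of_le_left (le_sup_of_le_left (le_sup_of_le_left le_sup_left))
    · exact fun h => hgub u x hu hx h (inf_le_of_left_le (inf_le_of_left_le inf_le_left))
  · refine vertex_ok _ _ L m hm0 (H u hu w hw) ?_ hLm ?_
    · calc (if u.2 - w.2 ≤ 0 then (u.2 - w.2) / (u.1 - w.1) else 0) = loAux u w := rfl
        _ ≤ L := le_sup_of_le_left (le_sup_of_le_left (le_sup_of_le_left le_sup_right))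
    · exact fun h => hgub u w hu hw h (inf_le_of_left_le (inf_le_of_left_le inf_le_right))
  · refine vertex_ok _ _ L m hm0 (H v hv x hx) ?_ hLm ?_
    · calc (if v.2 - x.2 ≤ 0 then (v.2 - x.2) / (v.1 - x.1) else 0) = loAux v x := rfl
        _ ≤ L := le_sup_of_le_left (le_sup_of_le_left le_sup_right)
    · exact fun h => hgub v x hv hx h (inf_le_of_left_le inf_le_right)
  · refine vertex_ok _ _ L m hm0 (H v hv w hw) ?_ hLm ?_
    · calc (if v.2 - w.2 ≤ 0 then (v.2 - w.2) / (v.1 - w.1) else 0) = loAux v w := rfl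
        _ ≤ L := le_sup_of_le_left le_sup_right
    · exact fun h => hgub v w hv hw h inf_le_right

theorem no_separating_line_2v2_iff (u v w x : ℝ × ℝ) :
    (¬ ∃ m c : ℝ, m > 0 ∧
        u.2 > m * u.1 + c ∧ v.2 > m * v.1 + c ∧
        x.2 < m * x.1 + c ∧ w.2 < m * w.1 + c) ↔
    ∃ a ∈ segment ℝ u v, ∃ b ∈ segment ℝ x w, b.1 ≤ a.1 ∧ b.2 ≥ a.2 := by
  constructor
  · intro hno
    by_contra hcon
    push_neg at hcon
    have H : ∀ a ∈ segment ℝ u v, ∀ b ∈ segment ℝ x w,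
        a.1 - b.1 < 0 ∨ 0 < a.2 - b.2 := by
      intro a ha b hb
      rcases le_or_gt b.1 a.1 with h | h
      · right
        have := hcon a ha b hb h
        linarith
      · left; linarith
    obtain ⟨m, hm0, h1, h2, h3, h4⟩ := exists_slope u v x w H
    apply hno
    set A : ℝ := min (u.2 - m * u.1) (v.2 - m * v.1) with hAdef
    set B : ℝ := max (x.2 - m * x.1) (w.2 - m * w.1) with hBdef
    have hBA : B < A := by
      apply max_lt
      · apply lt_min
        · linarith [h1]
        · linarith [h3]
      · apply lt_min
        · linarith [h2]
        · linarith [h4]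
    refine ⟨m, (A + B) / 2, hm0, ?_, ?_, ?_, ?_⟩
    · have hA : A ≤ u.2 - m * u.1 := min_le_left _ _
      linarith
    · have hA : A ≤ v.2 - m * v.1 := min_le_right _ _
      linarith
    · have hB : x.2 - m * x.1 ≤ B := le_max_left _ _
      linarith
    · have hB : w.2 - m * w.1 ≤ B := le_max_right _ _
      linarith
  · rintro ⟨a, ha, b, hb, hb1, hb2⟩ ⟨m, c, hm, hu2, hv2, hx2, hw2⟩
    have hA : a.2 > m * a.1 + c := by
      obtain ⟨t, s, ht, hs, hts, rfl⟩ := ha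
      have hseq : s = 1 - t := by linarith
      subst hseq
      simp only [Prod.fst_add, Prod.snd_add, Prod.smul_fst, Prod.smul_snd, smul_eq_mul]
      rcases eq_or_lt_of_le ht with h | h
      · rw [← h]; ring_nf; linarith
      · have k1 := mul_lt_mul_of_pos_left hu2 h
        have k2 := mul_le_mul_of_nonneg_left hv2.le hs
        nlinarith [k1, k2]
    have hB : b.2 < m * b.1 + c := by
      obtain ⟨t, s, ht, hs, hts, rfl⟩ := hb
      have hseq : s = 1 - t := by linarith
      subst hseq
      simp only [Prod.fst_add, Prod.snd_add, Prod.smul_fst, Prod.smul_snd, smul_eq_mul]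
      rcases eq_or_lt_of_le ht with h | h
      · rw [← h]; ring_nf; linarith
      · have k1 := mul_lt_mul_of_pos_left hx2 h
        have k2 := mul_le_mul_of_nonneg_left hw2.le hs
        nlinarith [k1, k2]
    have hmb : m * b.1 ≤ m * a.1 := mul_le_mul_of_nonneg_left hb1 hm.le
    linarith
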